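/- Theorem 4 (Z-Bias with a general propensity score, weak conditions). Let Π : Ω → [0,1] be a random variable with E[1_{A=1} | σ(Π)] = Π almost surely (a propensity score). Assume: (i) for a = 0,1 there exists a non-decreasing measurable function e_a : ℝ → ℝ with e_a(Y_a) = E[1_{A=1} | σ(Y_a)] almost surely; (ii) for a = 0,1 there exist versions ν_a of E(Y | A=a, Π) with ν_a(Π) and Π·ν_a(Π) integrable and cov(Π, ν_a(Π)) := E[Π·ν_a(Π)] − E[Π]·E[ν_a(Π)] ≤ 0. Then ACE_1^adj ≥ ACE_unadj ≥ ACE_1^true, ACE_0^adj ≥ ACE_unadj ≥ ACE_0^true, and ACE_adj ≥ ACE_unadj ≥ ACE_true, where ACE_1^adj := E(Y | A=1) − E(ν_0(Π) | A=1), ACE_0^adj := E(ν_1(Π) | A=0) − E(Y | A=0), and ACE_adj := E[ν_1(Π)] − E[ν_0(Π)]. -/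

import Mathlib

open MeasureTheory ProbabilityTheory Set

/-- Conditional expectation of `W` given the event `E`: `E(W | E) = E[W·1_E]/P(E)`. -/
noncomputable def cE {Ω : Type*} [MeasurableSpace Ω] (P : Measure Ω) (W : Ω → ℝ) (E : Set Ω) : ℝ :=
  (∫ ω in E, W ω ∂P) / (P E).toReal

/-- The indicator `1_{A = a}` as a real-valued function. -/
noncomputable def indic {Ω : Type*} (A : Ω → ℝ) (a : ℝ) : Ω → ℝ :=
  Set.indicator {ω | A ω = a} (fun _ => (1 : ℝ))

/-- The σ-algebra generated by a random element `V`. -/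
def sigmaOf {Ω α : Type*} [MeasurableSpace α] (V : Ω → α) : MeasurableSpace Ω :=
  MeasurableSpace.comap V inferInstance

lemma chebyshev_assoc {Ω : Type*} [MeasurableSpace Ω] (P : Measure Ω) [IsProbabilityMeasure P]
    (X G : Ω → ℝ) (hX : Integrable X P) (hG : Integrable G P)
    (hXG : Integrable (fun ω => X ω * G ω) P)
    (hmono : ∀ ω ω', X ω ≤ X ω' → G ω ≤ G ω') :
    (∫ ω, X ω ∂P) * (∫ ω, G ω ∂P) ≤ ∫ ω, X ω * G ω ∂P := by
  set Q := P.prod P with hQ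
  have i1 : Integrable (fun z : Ω × Ω => (X z.1 * G z.1) * (1 : ℝ)) Q :=
    hXG.mul_prod (integrable_const 1)
  have i1' : Integrable (fun z : Ω × Ω => X z.1 * G z.1) Q := by simpa using i1
  have i2 : Integrable (fun z : Ω × Ω => X z.1 * G z.2) Q := hX.mul_prod hG
  have i3 : Integrable (fun z : Ω × Ω => G z.1 * X z.2) Q := hG.mul_prod hX
  have i3' : Integrable (fun z : Ω × Ω => X z.2 * G z.1) Q := by
    simpa [mul_comm] using i3
  have i4 : Integrable (fun z : Ω × Ω => (1 : ℝ) * (X z.2 * G z.2)) Q :=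
    (integrable_const 1).mul_prod hXG
  have i4' : Integrable (fun z : Ω × Ω => X z.2 * G z.2) Q := by simpa using i4
  have hpos : 0 ≤ ∫ z, (X z.1 - X z.2) * (G z.1 - G z.2) ∂Q := by
    refine integral_nonneg fun z => ?_
    show (0:ℝ) ≤ _
    rcases le_total (X z.1) (X z.2) with h | h
    · have := hmono _ _ h
      have h2 : (X z.2 - X z.1) * (G z.2 - G z.1) ≥ 0 := mul_nonneg (by linarith) (by linarith)
      nlinarith [h2]
    · exact mul_nonneg (by linarith) (by linarith [hmono _ _ h])
  have hexp : ∫ z, (X z.1 - X z.2) * (G z.1 - G z.2) ∂Q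
      = (∫ z, X z.1 * G z.1 ∂Q) - (∫ z, X z.1 * G z.2 ∂Q)
        - (∫ z, X z.2 * G z.1 ∂Q) + (∫ z, X z.2 * G z.2 ∂Q) := by
    have hfe : (fun z : Ω × Ω => (X z.1 - X z.2) * (G z.1 - G z.2))
        = fun z => (X z.1 * G z.1 - X z.1 * G z.2 - X z.2 * G z.1) + X z.2 * G z.2 := by
      funext z; ring
    have ia : Integrable (fun z : Ω × Ω => X z.1 * G z.1 - X z.1 * G z.2 - X z.2 * G z.1) Q :=
      (i1'.sub i2).sub i3'
    have ib : Integrable (fun z : Ω × Ω => X z.1 * G z.1 - X z.1 * G z.2) Q := i1'.sub i2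
    rw [hfe, integral_add ia i4', integral_sub ib i3', integral_sub i1' i2]
  have e1 : ∫ z, X z.1 * G z.1 ∂Q = ∫ ω, X ω * G ω ∂P := by
    have := integral_prod_mul (μ := P) (ν := P) (fun ω => X ω * G ω) (fun _ => (1:ℝ))
    simpa using this
  have e2 : ∫ z, X z.1 * G z.2 ∂Q = (∫ ω, X ω ∂P) * (∫ ω, G ω ∂P) :=
    integral_prod_mul X G
  have e3 : ∫ z, X z.2 * G z.1 ∂Q = (∫ ω, X ω ∂P) * (∫ ω, G ω ∂P) := by
    have := integral_prod_mul (μ := P) (ν := P) G X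
    simp only [mul_comm] at this ⊢
    simpa [mul_comm] using this
  have e4 : ∫ z, X z.2 * G z.2 ∂Q = ∫ ω, X ω * G ω ∂P := by
    have := integral_prod_mul (μ := P) (ν := P) (fun _ => (1:ℝ)) (fun ω => X ω * G ω)
    simpa using this
  rw [hexp, e1, e2, e3, e4] at hpos
  linarith

/-- Division inequality helper: if `0 < f < 1` and `p ≤ f * n` then `p/f ≤ (n-p)/(1-f)`. -/
lemma div_ineq_aux {f p n : ℝ} (hf0 : 0 < f) (hf1 : f < 1) (h : p ≤ f * n) :
    p / f ≤ (n - p) / (1 - f) := by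
  rw [div_le_div_iff₀ hf0 (by linarith)]
  nlinarith

set_option maxHeartbeats 2000000 in
/-- Theorem 4: Z-Bias with a general propensity score, weak conditions. -/
theorem zbias_general_weak
    {Ω : Type*} [MeasurableSpace Ω] (P : Measure Ω) [IsProbabilityMeasure P]
    (A Y1 Y0 : Ω → ℝ)
    (hAmeas : Measurable A) (hAbin : ∀ ω, A ω = 0 ∨ A ω = 1)
    (hY1int : Integrable Y1 P) (hY0int : Integrable Y0 P)
    (hY1meas : Measurable Y1) (hY0meas : Measurable Y0)
    (Y : Ω → ℝ) (hYdef : ∀ ω, Y ω = A ω * Y1 ω + (1 - A ω) * Y0 ω)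
    (hYint : Integrable Y P)
    (hf0 : 0 < (P {ω | A ω = 1}).toReal) (hf1 : (P {ω | A ω = 1}).toReal < 1)
    -- Π is a propensity score taking values in [0, 1]
    (Pi : Ω → ℝ) (hPiMeas : Measurable Pi) (hPiRange : ∀ ω, Pi ω ∈ Set.Icc (0:ℝ) 1)
    (hPiScore : ∀ᵐ ω ∂P, (P[indic A 1 | sigmaOf Pi]) ω = Pi ω)
    -- (i) non-decreasing versions of P(A=1 | Y_a)
    (e1 e0 : ℝ → ℝ) (he1Meas : Measurable e1) (he0Meas : Measurable e0)
    (he1Mono : Monotone e1) (he0Mono : Monotone e0)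
    (he1Ver : ∀ᵐ ω ∂P, e1 (Y1 ω) = (P[indic A 1 | sigmaOf Y1]) ω)
    (he0Ver : ∀ᵐ ω ∂P, e0 (Y0 ω) = (P[indic A 1 | sigmaOf Y0]) ω)
    -- (ii) versions of E(Y | A=a, Π) with non-positive covariance with Π
    (ν1 ν0 : ℝ → ℝ) (hν1Meas : Measurable ν1) (hν0Meas : Measurable ν0)
    (hν1Ver : ∀ᵐ ω ∂P, ν1 (Pi ω) * (P[indic A 1 | sigmaOf Pi]) ω
      = (P[fun ω' => Y ω' * indic A 1 ω' | sigmaOf Pi]) ω)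
    (hν0Ver : ∀ᵐ ω ∂P, ν0 (Pi ω) * (P[indic A 0 | sigmaOf Pi]) ω
      = (P[fun ω' => Y ω' * indic A 0 ω' | sigmaOf Pi]) ω)
    (hν1Int : Integrable (fun ω => ν1 (Pi ω)) P)
    (hν0Int : Integrable (fun ω => ν0 (Pi ω)) P)
    (hPiν1Int : Integrable (fun ω => Pi ω * ν1 (Pi ω)) P)
    (hPiν0Int : Integrable (fun ω => Pi ω * ν0 (Pi ω)) P)
    (hcov1 : (∫ ω, Pi ω * ν1 (Pi ω) ∂P) - (∫ ω, Pi ω ∂P) * (∫ ω, ν1 (Pi ω) ∂P) ≤ 0)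
    (hcov0 : (∫ ω, Pi ω * ν0 (Pi ω) ∂P) - (∫ ω, Pi ω ∂P) * (∫ ω, ν0 (Pi ω) ∂P) ≤ 0) :
    -- ACE_1^adj ≥ ACE_unadj ≥ ACE_1^true
    (cE P Y {ω | A ω = 1} - cE P (fun ω => ν0 (Pi ω)) {ω | A ω = 1}
      ≥ cE P Y {ω | A ω = 1} - cE P Y {ω | A ω = 0}) ∧
    (cE P Y {ω | A ω = 1} - cE P Y {ω | A ω = 0}
      ≥ cE P Y {ω | A ω = 1} - cE P Y0 {ω | A ω = 1}) ∧
    -- ACE_0^adj ≥ ACE_unadj ≥ ACE_0^true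
    (cE P (fun ω => ν1 (Pi ω)) {ω | A ω = 0} - cE P Y {ω | A ω = 0}
      ≥ cE P Y {ω | A ω = 1} - cE P Y {ω | A ω = 0}) ∧
    (cE P Y {ω | A ω = 1} - cE P Y {ω | A ω = 0}
      ≥ cE P Y1 {ω | A ω = 0} - cE P Y {ω | A ω = 0}) ∧
    -- ACE^adj ≥ ACE_unadj ≥ ACE^true
    ((∫ ω, ν1 (Pi ω) ∂P) - (∫ ω, ν0 (Pi ω) ∂P)
      ≥ cE P Y {ω | A ω = 1} - cE P Y {ω | A ω = 0}) ∧
    (cE P Y {ω | A ω = 1} - cE P Y {ω | A ω = 0}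
      ≥ (∫ ω, Y1 ω ∂P) - (∫ ω, Y0 ω ∂P)) := by
  classical
  -- basic measurability
  have hS1 : MeasurableSet {ω | A ω = 1} := hAmeas (measurableSet_singleton 1)
  have hS0 : MeasurableSet {ω | A ω = 0} := hAmeas (measurableSet_singleton 0)
  have hS0c : {ω | A ω = 0} = {ω | A ω = 1}ᶜ := by
    ext ω; rcases hAbin ω with h | h <;> simp [h]
  set f := (P {ω | A ω = 1}).toReal with hfdef
  have hPS0 : (P {ω | A ω = 0}).toReal = 1 - f := by
    rw [hS0c, prob_compl_eq_one_sub hS1, ENNReal.toReal_sub_of_le prob_le_one (by simp)]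
    simp [hfdef]
  -- indicator facts
  have hindMeas1 : Measurable (indic A 1) := measurable_const.indicator hS1
  have hindMeas0 : Measurable (indic A 0) := measurable_const.indicator hS0
  have hindInt1 : Integrable (indic A 1) P := (integrable_const (1:ℝ)).indicator hS1
  have hindBdd1 : ∀ ω, ‖indic A 1 ω‖ ≤ 1 := by
    intro ω; by_cases h : A ω = 1 <;> simp [indic, Set.indicator, h]
  have hindBdd0 : ∀ ω, ‖indic A 0 ω‖ ≤ 1 := by
    intro ω; by_cases h : A ω = 0 <;> simp [indic, Set.indicator, h]
  have hmulInt1 : ∀ (W : Ω → ℝ), Integrable W P →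
      Integrable (fun ω => W ω * indic A 1 ω) P := by
    intro W hW
    have := hW.bdd_mul (c := 1) hindMeas1.aestronglyMeasurable (ae_of_all _ hindBdd1)
    exact this.congr (ae_of_all _ fun ω => mul_comm _ _)
  have hmulInt0 : ∀ (W : Ω → ℝ), Integrable W P →
      Integrable (fun ω => W ω * indic A 0 ω) P := by
    intro W hW
    have := hW.bdd_mul (c := 1) hindMeas0.aestronglyMeasurable (ae_of_all _ hindBdd0)
    exact this.congr (ae_of_all _ fun ω => mul_comm _ _)
  -- set integrals as integrals against indicators
  have hind1 : ∀ (W : Ω → ℝ), (fun ω => W ω * indic A 1 ω) = Set.indicator {ω | A ω = 1} W := by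
    intro W; funext ω; by_cases h : A ω = 1 <;> simp [indic, Set.indicator, h]
  have hind0 : ∀ (W : Ω → ℝ), (fun ω => W ω * indic A 0 ω) = Set.indicator {ω | A ω = 0} W := by
    intro W; funext ω; by_cases h : A ω = 0 <;> simp [indic, Set.indicator, h]
  have hsetint1 : ∀ (W : Ω → ℝ), ∫ ω in {ω | A ω = 1}, W ω ∂P = ∫ ω, W ω * indic A 1 ω ∂P := by
    intro W; rw [hind1 W, integral_indicator hS1]
  have hsetint0 : ∀ (W : Ω → ℝ), ∫ ω in {ω | A ω = 0}, W ω ∂P = ∫ ω, W ω * indic A 0 ω ∂P := by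
    intro W; rw [hind0 W, integral_indicator hS0]
  -- σ-algebras
  have hmPi : sigmaOf Pi ≤ ‹MeasurableSpace Ω› := hPiMeas.comap_le
  have hmY1 : sigmaOf Y1 ≤ ‹MeasurableSpace Ω› := hY1meas.comap_le
  have hmY0 : sigmaOf Y0 ≤ ‹MeasurableSpace Ω› := hY0meas.comap_le
  -- indic A 0 = 1 - indic A 1
  have hind01 : indic A 0 = fun ω => 1 - indic A 1 ω := by
    funext ω; rcases hAbin ω with h | h <;> simp [indic, Set.indicator, h]
  -- E[indic A 0 | σ(Π)] = 1 - Π a.e.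
  have hcond0Pi : (P[indic A 0 | sigmaOf Pi]) =ᵐ[P] fun ω => 1 - Pi ω := by
    rw [hind01]
    have hsub : (P[(fun ω => (1:ℝ) - indic A 1 ω) | sigmaOf Pi])
        =ᵐ[P] (P[(fun _ => (1:ℝ)) | sigmaOf Pi]) - (P[indic A 1 | sigmaOf Pi]) :=
      condExp_sub (integrable_const 1) hindInt1 _
    filter_upwards [hsub, hPiScore] with ω h1 h2
    rw [h1]
    show (P[(fun _ => (1:ℝ)) | sigmaOf Pi]) ω - (P[indic A 1 | sigmaOf Pi]) ω = 1 - Pi ω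
    rw [condExp_const hmPi, h2]
  -- f = ∫ indic A 1
  have hintInd1 : ∫ ω, indic A 1 ω ∂P = f := by
    rw [indic, integral_indicator_const (1:ℝ) hS1]; simp [hfdef]; rfl
  -- f = ∫ Π
  have hfPi : ∫ ω, Pi ω ∂P = f := by
    have h := integral_congr_ae hPiScore
    rw [← h, integral_condExp hmPi, hintInd1]
  -- main integral identities
  have hYind1Int : Integrable (fun ω => Y ω * indic A 1 ω) P := hmulInt1 Y hYint
  have hYind0Int : Integrable (fun ω => Y ω * indic A 0 ω) P := hmulInt0 Y hYint
  -- F1 : ∫ Y·1_{A=1} = ∫ Π ν1(Π)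
  have hF1 : ∫ ω, Y ω * indic A 1 ω ∂P = ∫ ω, Pi ω * ν1 (Pi ω) ∂P := by
    rw [← integral_condExp hmPi]
    apply integral_congr_ae
    filter_upwards [hν1Ver, hPiScore] with ω h1 h2
    rw [← h1, h2, mul_comm]
  -- F2 : ∫ Y·1_{A=0} = ∫ ν0(Π) - ∫ Π ν0(Π)
  have hF2 : ∫ ω, Y ω * indic A 0 ω ∂P
      = (∫ ω, ν0 (Pi ω) ∂P) - ∫ ω, Pi ω * ν0 (Pi ω) ∂P := by
    rw [← integral_sub hν0Int hPiν0Int, ← integral_condExp hmPi]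
    apply integral_congr_ae
    filter_upwards [hν0Ver, hPiScore, hcond0Pi] with ω h1 h2 h3
    rw [← h1, h3]; ring
  -- strong measurability of ν a (Π) w.r.t. σ(Π)
  have hν0sm : StronglyMeasurable[sigmaOf Pi] (fun ω => ν0 (Pi ω)) :=
    (hν0Meas.comp (comap_measurable Pi)).stronglyMeasurable
  have hν1sm : StronglyMeasurable[sigmaOf Pi] (fun ω => ν1 (Pi ω)) :=
    (hν1Meas.comp (comap_measurable Pi)).stronglyMeasurable
  -- F3 : ∫ ν0(Π)·1_{A=1} = ∫ Π ν0(Π)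
  have hF3 : ∫ ω, ν0 (Pi ω) * indic A 1 ω ∂P = ∫ ω, Pi ω * ν0 (Pi ω) ∂P := by
    have hInt : Integrable ((fun ω => ν0 (Pi ω)) * indic A 1) P := hmulInt1 _ hν0Int
    have hpull := condExp_mul_of_stronglyMeasurable_left (μ := P) hν0sm hInt hindInt1
    have : ∫ ω, ν0 (Pi ω) * indic A 1 ω ∂P = ∫ ω, ((fun ω => ν0 (Pi ω)) * indic A 1) ω ∂P := rfl
    rw [this, ← integral_condExp hmPi]
    apply integral_congr_ae
    filter_upwards [hpull, hPiScore] with ω h1 h2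
    rw [h1]
    show ν0 (Pi ω) * (P[indic A 1 | sigmaOf Pi]) ω = _
    rw [h2, mul_comm]
  -- F4 : ∫ ν1(Π)·1_{A=0} = ∫ ν1(Π) - ∫ Π ν1(Π)
  have hF4 : ∫ ω, ν1 (Pi ω) * indic A 0 ω ∂P
      = (∫ ω, ν1 (Pi ω) ∂P) - ∫ ω, Pi ω * ν1 (Pi ω) ∂P := by
    have hindInt0 : Integrable (indic A 0) P := (integrable_const (1:ℝ)).indicator hS0
    have hInt : Integrable ((fun ω => ν1 (Pi ω)) * indic A 0) P := hmulInt0 _ hν1Int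
    have hpull := condExp_mul_of_stronglyMeasurable_left (μ := P) hν1sm hInt hindInt0
    have h0 : ∫ ω, ν1 (Pi ω) * indic A 0 ω ∂P = ∫ ω, ((fun ω => ν1 (Pi ω)) * indic A 0) ω ∂P := rfl
    rw [h0, ← integral_condExp hmPi, ← integral_sub hν1Int hPiν1Int]
    apply integral_congr_ae
    filter_upwards [hpull, hcond0Pi] with ω h1 h2
    rw [h1]
    show ν1 (Pi ω) * (P[indic A 0 | sigmaOf Pi]) ω = _
    rw [h2]; ring
  -- pointwise bounds for the indicator
  have hindle1 : ∀ ω, indic A 1 ω ≤ 1 := fun ω =>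
    (le_abs_self _).trans (by simpa [Real.norm_eq_abs] using hindBdd1 ω)
  have hindnn : ∀ ω, (0:ℝ) ≤ indic A 1 ω := by
    intro ω; by_cases h : A ω = 1 <;> simp [indic, Set.indicator, h]
  -- Chebyshev-type inequality for each arm
  have hChebArm : ∀ (Ya : Ω → ℝ) (ea : ℝ → ℝ), Integrable Ya P → Measurable Ya →
      Measurable ea → Monotone ea →
      ((fun ω => ea (Ya ω)) =ᵐ[P] (P[indic A 1 | sigmaOf Ya])) →
      f * (∫ ω, Ya ω ∂P) ≤ ∫ ω, Ya ω * indic A 1 ω ∂P := by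
    intro Ya ea hYaInt hYaMeas heaMeas heaMono heaVer
    have hmYa : sigmaOf Ya ≤ ‹MeasurableSpace Ω› := hYaMeas.comap_le
    have hle1 : (P[indic A 1 | sigmaOf Ya]) ≤ᵐ[P] fun _ => (1:ℝ) := by
      have h1 := condExp_mono (μ := P) (m := sigmaOf Ya) hindInt1 (integrable_const (1:ℝ))
        (ae_of_all _ hindle1)
      rwa [condExp_const hmYa] at h1
    have hge0 : (fun _ => (0:ℝ)) ≤ᵐ[P] (P[indic A 1 | sigmaOf Ya]) :=
      condExp_nonneg (ae_of_all _ hindnn)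
    have hGbd : ∀ᵐ ω ∂P, ‖ea (Ya ω)‖ ≤ 1 := by
      filter_upwards [heaVer, hle1, hge0] with ω hv hb ha
      rw [hv, Real.norm_eq_abs, abs_le]
      exact ⟨by linarith [ha], by linarith [hb]⟩
    have hGint : Integrable (fun ω => ea (Ya ω)) P := integrable_condExp.congr heaVer.symm
    have hXGint : Integrable (fun ω => Ya ω * ea (Ya ω)) P := by
      have := hYaInt.bdd_mul (c := 1) ((heaMeas.comp hYaMeas).aestronglyMeasurable) hGbd
      exact this.congr (ae_of_all _ fun ω => mul_comm _ _)
    have hch := chebyshev_assoc P Ya (fun ω => ea (Ya ω)) hYaInt hGint hXGint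
      (fun ω ω' h => heaMono h)
    have hGf : ∫ ω, ea (Ya ω) ∂P = f := by
      rw [integral_congr_ae heaVer, integral_condExp hmYa, hintInd1]
    have hYasm : StronglyMeasurable[sigmaOf Ya] Ya := (comap_measurable Ya).stronglyMeasurable
    have hInt' : Integrable (Ya * indic A 1) P := hmulInt1 Ya hYaInt
    have hpull := condExp_mul_of_stronglyMeasurable_left (μ := P) hYasm hInt' hindInt1
    have hid : ∫ ω, Ya ω * indic A 1 ω ∂P = ∫ ω, Ya ω * ea (Ya ω) ∂P := by
      have h0 : ∫ ω, Ya ω * indic A 1 ω ∂P = ∫ ω, (Ya * indic A 1) ω ∂P := rfl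
      rw [h0, ← integral_condExp hmYa]
      apply integral_congr_ae
      filter_upwards [hpull, heaVer] with ω h1 h2
      rw [h1]
      show Ya ω * (P[indic A 1 | sigmaOf Ya]) ω = _
      rw [← h2]
    rw [hid]
    calc f * ∫ ω, Ya ω ∂P = (∫ ω, Ya ω ∂P) * (∫ ω, ea (Ya ω) ∂P) := by rw [hGf]; ring
    _ ≤ ∫ ω, Ya ω * ea (Ya ω) ∂P := hch
  have hT1 : f * (∫ ω, Y1 ω ∂P) ≤ ∫ ω, Y1 ω * indic A 1 ω ∂P :=
    hChebArm Y1 e1 hY1int hY1meas he1Meas he1Mono he1Ver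
  have hT0 : f * (∫ ω, Y0 ω ∂P) ≤ ∫ ω, Y0 ω * indic A 1 ω ∂P :=
    hChebArm Y0 e0 hY0int hY0meas he0Meas he0Mono he0Ver
  -- Y agrees with Y1 on {A=1} and Y0 on {A=0}
  have hYS1 : ∫ ω in {ω | A ω = 1}, Y ω ∂P = ∫ ω in {ω | A ω = 1}, Y1 ω ∂P := by
    refine setIntegral_congr_fun hS1 fun ω hω => ?_
    have : A ω = 1 := hω
    rw [hYdef ω, this]; ring
  have hYS0 : ∫ ω in {ω | A ω = 0}, Y ω ∂P = ∫ ω in {ω | A ω = 0}, Y0 ω ∂P := by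
    refine setIntegral_congr_fun hS0 fun ω hω => ?_
    have : A ω = 0 := hω
    rw [hYdef ω, this]; ring
  -- compl splitting for set integrals
  have hcompl : ∀ (W : Ω → ℝ), Integrable W P →
      ∫ ω in {ω | A ω = 0}, W ω ∂P = (∫ ω, W ω ∂P) - ∫ ω, W ω * indic A 1 ω ∂P := by
    intro W hW
    have h := integral_add_compl hS1 hW
    rw [hS0c, ← hsetint1 W]
    linarith
  -- abbreviations
  set p1 := ∫ ω, Pi ω * ν1 (Pi ω) ∂P with hp1
  set p0 := ∫ ω, Pi ω * ν0 (Pi ω) ∂P with hp0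
  set n1 := ∫ ω, ν1 (Pi ω) ∂P with hn1
  set n0 := ∫ ω, ν0 (Pi ω) ∂P with hn0
  set I1 := ∫ ω, Y1 ω ∂P with hI1
  set I0 := ∫ ω, Y0 ω ∂P with hI0
  set t1 := ∫ ω, Y1 ω * indic A 1 ω ∂P with ht1
  set t0 := ∫ ω, Y0 ω * indic A 1 ω ∂P with ht0
  have hcov1' : p1 ≤ f * n1 := by rw [hfPi] at hcov1; linarith
  have hcov0' : p0 ≤ f * n0 := by rw [hfPi] at hcov0; linarith
  -- values of all the conditional expectations
  have hu1 : cE P Y {ω | A ω = 1} = p1 / f := by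
    rw [cE, hsetint1 Y, hF1]
  have hu1' : cE P Y {ω | A ω = 1} = t1 / f := by
    rw [cE, hYS1, hsetint1 Y1]
  have hu0 : cE P Y {ω | A ω = 0} = (n0 - p0) / (1 - f) := by
    rw [cE, hsetint0 Y, hF2, hPS0]
  have hu0' : cE P Y {ω | A ω = 0} = (I0 - t0) / (1 - f) := by
    rw [cE, hYS0, hcompl Y0 hY0int, hPS0]
  have hv0 : cE P (fun ω => ν0 (Pi ω)) {ω | A ω = 1} = p0 / f := by
    rw [cE, hsetint1 (fun ω => ν0 (Pi ω)), hF3]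
  have hv1 : cE P (fun ω => ν1 (Pi ω)) {ω | A ω = 0} = (n1 - p1) / (1 - f) := by
    rw [cE, hsetint0 (fun ω => ν1 (Pi ω)), hF4, hPS0]
  have hw0 : cE P Y0 {ω | A ω = 1} = t0 / f := by
    rw [cE, hsetint1 Y0]
  have hw1 : cE P Y1 {ω | A ω = 0} = (I1 - t1) / (1 - f) := by
    rw [cE, hcompl Y1 hY1int, hPS0]
  have hf1' : (0:ℝ) < 1 - f := by linarith
  -- the six inequalities
  refine ⟨?_, ?_, ?_, ?_, ?_, ?_⟩
  · rw [hv0, hu0]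
    have := div_ineq_aux hf0 hf1 hcov0'
    linarith
  · rw [hu0', hw0]
    have : (I0 - t0) / (1 - f) ≤ t0 / f := by
      rw [div_le_div_iff₀ hf1' hf0]; nlinarith
    linarith
  · rw [hv1, hu1]
    have := div_ineq_aux hf0 hf1 hcov1'
    linarith
  · rw [hu1', hw1]
    have : (I1 - t1) / (1 - f) ≤ t1 / f := by
      rw [div_le_div_iff₀ hf1' hf0]; nlinarith
    linarith
  · rw [hu1, hu0]
    have h1 : p1 / f ≤ n1 := by rw [div_le_iff₀ hf0]; nlinarith
    have h2 : n0 ≤ (n0 - p0) / (1 - f) := by rw [le_div_iff₀ hf1']; nlinarith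
    linarith
  · rw [hu1', hu0']
    have h1 : I1 ≤ t1 / f := by rw [le_div_iff₀ hf0]; nlinarith
    have h2 : (I0 - t0) / (1 - f) ≤ I0 := by rw [div_le_iff₀ hf1']; nlinarith
    linarith
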